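/- Let E be the exterior algebra on n variables over an infinite field and P_n the path graph on n vertices. If n ≡ 1 (mod 3), then the linear form e_1 + e_4 + e_7 + ... + e_{n} (the sum of e_{3i+1} for 0 ≤ i ≤ ⌊n/3⌋) is a regular element on E/I_E(P_n). -/

import Mathlib

open ExteriorAlgebra

noncomputable instance instModuleExtSelf (K : Type*) [Field K] (V : Type*) [AddCommGroup V]
    [Module K V] : Module (ExteriorAlgebra K V) (ExteriorAlgebra K V) := Semiring.toModule

/-- The edge ideal of a simple graph `G` in the exterior algebra on its vertex set. -/
noncomputable def edgeIdeal (K : Type*) [Field K] {α : Type*} [DecidableEq α]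
    (G : SimpleGraph α) : Ideal (ExteriorAlgebra K (α → K)) :=
  Ideal.span {x | ∃ i j, G.Adj i j ∧
      x = ExteriorAlgebra.ι K (Pi.single i 1) * ExteriorAlgebra.ι K (Pi.single j 1)}

namespace Stmt8Aux

variable (K : Type*) [Field K] {n : ℕ}

noncomputable def ee (i : Fin n) : ExteriorAlgebra K (Fin n → K) :=
  ExteriorAlgebra.ι K (Pi.single i 1)

noncomputable def mon (S : Finset (Fin n)) : ExteriorAlgebra K (Fin n → K) :=
  ((S.sort (· ≤ ·)).map (ee K)).prod

variable {K}

lemma ee_swap (i j : Fin n) : ee K i * ee K j = -(ee K j * ee K i) :=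
  eq_neg_of_add_eq_zero_left (ι_add_mul_swap _ _)

lemma ee_sq (i : Fin n) : ee K i * ee K i = 0 := ι_sq_zero _

lemma mon_empty : mon K (∅ : Finset (Fin n)) = 1 := by
  simp [mon, Finset.sort_empty]

lemma mon_insert_min {a : Fin n} {S : Finset (Fin n)} (ha : a ∉ S) (h : ∀ b ∈ S, a ≤ b) :
    mon K (insert a S) = ee K a * mon K S := by
  unfold mon
  rw [Finset.sort_insert _ h ha, List.map_cons, List.prod_cons]

lemma ee_mul_mon (j : Fin n) (S : Finset (Fin n)) :
    ee K j * mon K S =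
      if j ∈ S then 0
      else ((-1 : K) ^ ((S.filter (· < j)).card)) • mon K (insert j S) := by
  induction S using Finset.strongInductionOn with
  | _ S ih =>
  rcases S.eq_empty_or_nonempty with rfl | hS
  · simp only [Finset.notMem_empty, if_neg, Finset.filter_empty, Finset.card_empty, pow_zero,
      one_smul, mon_empty, mul_one, if_false]
    rw [insert_empty_eq, mon, Finset.sort_singleton, List.map_cons, List.map_nil,
      List.prod_cons, List.prod_nil, mul_one]
  · set a := S.min' hS with ha_def
    have haS : a ∈ S := S.min'_mem hS
    have hmon : mon K S = ee K a * mon K (S.erase a) := by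
      conv_lhs => rw [← Finset.insert_erase haS]
      exact mon_insert_min (Finset.notMem_erase _ _)
        (fun b hb => S.min'_le b (Finset.mem_of_mem_erase hb))
    have herase : S.erase a ⊂ S := Finset.erase_ssubset haS
    rcases eq_or_ne j a with rfl | hja
    · rw [if_pos haS, hmon, ← mul_assoc, ee_sq, zero_mul]
    rcases lt_or_gt_of_ne hja with hlt | hgt
    · -- j < a, so j ∉ S and j is the new minimum
      have hjS : j ∉ S := fun h => absurd (S.min'_le j h) (not_le.mpr hlt)
      rw [if_neg hjS]
      have hfilter : S.filter (· < j) = ∅ := by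
        refine Finset.filter_eq_empty_iff.mpr fun b hb => ?_
        exact not_lt.mpr ((S.min'_le b hb).trans' hlt.le)
      rw [hfilter, Finset.card_empty, pow_zero, one_smul]
      exact (mon_insert_min hjS (fun b hb => (hlt.le.trans (S.min'_le b hb)))).symm
    · -- a < j
      have hrw : ee K j * mon K S = -(ee K a * (ee K j * mon K (S.erase a))) := by
        rw [hmon, ← mul_assoc, ee_swap, neg_mul, mul_assoc]
      rw [hrw, ih _ herase]
      by_cases hjS : j ∈ S
      · rw [if_pos hjS, if_pos (Finset.mem_erase.mpr ⟨hja, hjS⟩), mul_zero, neg_zero]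
      · rw [if_neg hjS, if_neg (fun h => hjS (Finset.mem_of_mem_erase h))]
        have haj : a ∈ S.filter (· < j) := Finset.mem_filter.mpr ⟨haS, hgt⟩
        have hcard : ((S.erase a).filter (· < j)).card + 1 = (S.filter (· < j)).card := by
          rw [Finset.filter_erase, Finset.card_erase_of_mem haj]
          have : 0 < (S.filter (· < j)).card := Finset.card_pos.mpr ⟨a, haj⟩
          omega
        have h1 : a ∉ insert j (S.erase a) := by
          simp only [Finset.mem_insert, Finset.mem_erase]
          push_neg
          exact ⟨hgt.ne, fun h => absurd rfl h⟩
        have h2 : ∀ b ∈ insert j (S.erase a), a ≤ b := by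
          intro b hb
          rcases Finset.mem_insert.mp hb with rfl | hb
          · exact hgt.le
          · exact S.min'_le b (Finset.mem_of_mem_erase hb)
        have h3 : ee K a * mon K (insert j (S.erase a)) = mon K (insert j S) := by
          rw [← mon_insert_min h1 h2, Finset.insert_comm, Finset.insert_erase haS]
        rw [mul_smul_comm, h3, ← hcard, pow_succ, mul_neg_one, neg_smul]


lemma mon_singleton (i : Fin n) : mon K ({i} : Finset (Fin n)) = ee K i := by
  rw [mon, Finset.sort_singleton, List.map_cons, List.map_nil, List.prod_cons, List.prod_nil,
    mul_one]

variable (K n) in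
noncomputable def monSpan : Submodule K (ExteriorAlgebra K (Fin n → K)) :=
  Submodule.span K (Set.range (mon K (n := n)))

lemma mon_mem_monSpan (S : Finset (Fin n)) : mon K S ∈ monSpan K n :=
  Submodule.subset_span ⟨S, rfl⟩

lemma ee_mul_mem_monSpan (a : Fin n) {x : ExteriorAlgebra K (Fin n → K)} (hx : x ∈ monSpan K n) :
    ee K a * x ∈ monSpan K n := by
  induction hx using Submodule.span_induction with
  | mem x hx =>
    obtain ⟨S, rfl⟩ := hx
    rw [ee_mul_mon]
    split
    · exact Submodule.zero_mem _
    · exact Submodule.smul_mem _ _ (mon_mem_monSpan _)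
  | zero => rw [mul_zero]; exact Submodule.zero_mem _
  | add x y _ _ hx hy => rw [mul_add]; exact Submodule.add_mem _ hx hy
  | smul c x _ hx => rw [mul_smul_comm]; exact Submodule.smul_mem _ _ hx

lemma mul_mem_monSpan {x y : ExteriorAlgebra K (Fin n → K)} (hx : x ∈ monSpan K n)
    (hy : y ∈ monSpan K n) : x * y ∈ monSpan K n := by
  induction hx using Submodule.span_induction with
  | mem x hx =>
    obtain ⟨S, rfl⟩ := hx
    induction S using Finset.strongInductionOn with
    | _ S ih =>
    rcases S.eq_empty_or_nonempty with rfl | hS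
    · rw [mon_empty, one_mul]; exact hy
    · have haS : S.min' hS ∈ S := S.min'_mem hS
      have hmon : mon K S = ee K (S.min' hS) * mon K (S.erase (S.min' hS)) := by
        conv_lhs => rw [← Finset.insert_erase haS]
        exact mon_insert_min (Finset.notMem_erase _ _)
          (fun b hb => S.min'_le b (Finset.mem_of_mem_erase hb))
      rw [hmon, mul_assoc]
      exact ee_mul_mem_monSpan _ (ih _ (Finset.erase_ssubset haS))
  | zero => rw [zero_mul]; exact Submodule.zero_mem _
  | add x x' _ _ hx hx' => rw [add_mul]; exact Submodule.add_mem _ hx hx'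
  | smul c x _ hx => rw [smul_mul_assoc]; exact Submodule.smul_mem _ _ hx

lemma monSpan_eq_top : monSpan K n = ⊤ := by
  rw [Submodule.eq_top_iff']
  intro x
  induction x using ExteriorAlgebra.induction with
  | algebraMap r =>
    rw [Algebra.algebraMap_eq_smul_one, ← mon_empty (K := K) (n := n)]
    exact Submodule.smul_mem _ _ (mon_mem_monSpan _)
  | ι v =>
    have hv : v = ∑ i : Fin n, v i • (Pi.single i 1 : Fin n → K) := by
      funext j
      simp [Pi.single_apply, Finset.sum_apply]
    rw [hv, map_sum]
    refine Submodule.sum_mem _ fun i _ => ?_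
    rw [map_smul]
    have : (ι K) (Pi.single i 1 : Fin n → K) = mon K {i} := (mon_singleton i).symm
    rw [this]
    exact Submodule.smul_mem _ _ (mon_mem_monSpan _)
  | mul x y hx hy => exact mul_mem_monSpan hx hy
  | add x y hx hy => exact Submodule.add_mem _ hx hy

lemma mon_eq_iMulti (T : Finset (Fin n)) :
    mon K T = ιMulti K T.card (fun b => Pi.single (T.orderEmbOfFin rfl b) (1 : K)) := by
  rw [ιMulti_apply, mon]
  congr 1
  apply List.ext_getElem
  · simp
  · intro i h1 h2
    simp only [List.getElem_map, List.getElem_ofFn]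
    rw [ee]
    congr 1

variable (K) in
/-- The coefficient functional extracting the coefficient of `mon S`. -/
noncomputable def coeff (S : Finset (Fin n)) :
    ExteriorAlgebra K (Fin n → K) →ₗ[K] K :=
  liftAlternating (fun i =>
    if h : i = S.card then
      ((Matrix.detRowAlternating (n := Fin S.card) (R := K)).compLinearMap
        (LinearMap.funLeft K K (fun b : Fin S.card => S.orderEmbOfFin rfl b))).domDomCongr
        (finCongr h.symm)
    else 0)

lemma coeff_mon (S T : Finset (Fin n)) :
    coeff K S (mon K T) = if S = T then 1 else 0 := by
  rw [mon_eq_iMulti, coeff, liftAlternating_apply_ιMulti]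
  by_cases h : T.card = S.card
  · rw [dif_pos h]
    rcases eq_or_ne S T with rfl | hne
    · rw [if_pos rfl]
      simp only [AlternatingMap.domDomCongr_apply, AlternatingMap.compLinearMap_apply,
        LinearMap.funLeft_apply, Function.comp]
      have : ∀ x : Fin S.card, (finCongr (h.symm) x) = x := fun x => Fin.ext rfl
      show Matrix.det _ = 1
      have hM : (Matrix.of fun a b : Fin S.card =>
          (Pi.single ((S.orderEmbOfFin rfl) ((finCongr h.symm) a)) (1 : K) : Fin n → K)
            ((S.orderEmbOfFin rfl) b)) = (1 : Matrix (Fin S.card) (Fin S.card) K) := by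
        ext a b
        simp only [Matrix.of_apply]
        rw [this a]
        simp [Pi.single_apply, Matrix.one_apply, (S.orderEmbOfFin rfl).injective.eq_iff, eq_comm]
      show Matrix.det (Matrix.of fun a b : Fin S.card =>
          (Pi.single ((S.orderEmbOfFin rfl) ((finCongr h.symm) a)) (1 : K) : Fin n → K)
            ((S.orderEmbOfFin rfl) b)) = 1
      rw [hM, Matrix.det_one]
    · rw [if_neg hne]
      simp only [AlternatingMap.domDomCongr_apply, AlternatingMap.compLinearMap_apply,
        LinearMap.funLeft_apply, Function.comp]
      obtain ⟨a, haT, haS⟩ : ∃ a, a ∈ T ∧ a ∉ S := by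
        by_contra hc
        push_neg at hc
        exact hne (Finset.eq_of_subset_of_card_le hc h.ge).symm
      obtain ⟨b₀, hb₀⟩ : ∃ b₀ : Fin T.card, (T.orderEmbOfFin rfl) b₀ = a := by
        have := T.range_orderEmbOfFin (rfl : T.card = T.card)
        rw [Set.ext_iff] at this
        exact (this a).mpr haT
      show Matrix.det (Matrix.of fun a b : Fin S.card =>
          (Pi.single ((T.orderEmbOfFin rfl) ((finCongr h.symm) a)) (1 : K) : Fin n → K)
            ((S.orderEmbOfFin rfl) b)) = 0
      apply Matrix.det_eq_zero_of_row_eq_zero (finCongr h b₀)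
      intro j
      have hx : (finCongr h.symm) ((finCongr h) b₀) = b₀ := Fin.ext rfl
      show (Pi.single ((T.orderEmbOfFin rfl) ((finCongr h.symm) ((finCongr h) b₀))) (1 : K) :
        Fin n → K) ((S.orderEmbOfFin rfl) j) = 0
      rw [hx, hb₀, Pi.single_apply, if_neg]
      
      intro hcontra
      exact haS (hcontra ▸ Finset.orderEmbOfFin_mem S rfl j)
  · rw [dif_neg h, if_neg (fun hST => h (by rw [hST]))]
    rfl

lemma mon_linearIndependent : LinearIndependent K (mon K (n := n)) := by
  rw [Fintype.linearIndependent_iff]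
  intro g hg S
  have := congrArg (coeff K S) hg
  rw [map_sum, map_zero] at this
  simp only [map_smul, coeff_mon, smul_eq_mul, mul_ite, mul_one, mul_zero] at this
  rwa [Finset.sum_ite_eq Finset.univ S g, if_pos (Finset.mem_univ S)] at this

variable (K n) in
noncomputable def monBasis : Module.Basis (Finset (Fin n)) K (ExteriorAlgebra K (Fin n → K)) :=
  Module.Basis.mk mon_linearIndependent (by rw [← monSpan]; rw [monSpan_eq_top])

lemma monBasis_apply (S : Finset (Fin n)) : monBasis K n S = mon K S := Module.Basis.mk_apply _ _ _

/-! ### Combinatorics -/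

variable (n) in
def freeSet (S : Finset (Fin n)) : Finset (Fin n) :=
  Finset.univ.filter (fun j => (j : ℕ) % 3 = 0 ∧
    ∀ t ∈ S, (t : ℕ) % 3 ≠ 0 → ((t : ℕ) ≠ (j : ℕ) + 1 ∧ (j : ℕ) ≠ (t : ℕ) + 1))

lemma mem_freeSet {S : Finset (Fin n)} {j : Fin n} :
    j ∈ freeSet n S ↔ (j : ℕ) % 3 = 0 ∧
      ∀ t ∈ S, (t : ℕ) % 3 ≠ 0 → ((t : ℕ) ≠ (j : ℕ) + 1 ∧ (j : ℕ) ≠ (t : ℕ) + 1) := by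
  simp [freeSet]

lemma freeSet_insert {S : Finset (Fin n)} {j : Fin n} (hj : (j : ℕ) % 3 = 0) :
    freeSet n (insert j S) = freeSet n S := by
  ext i
  simp only [mem_freeSet, Finset.mem_insert]
  constructor
  · rintro ⟨h1, h2⟩
    exact ⟨h1, fun t ht => h2 t (Or.inr ht)⟩
  · rintro ⟨h1, h2⟩
    refine ⟨h1, fun t ht h3 => ?_⟩
    rcases ht with rfl | ht
    · exact absurd hj h3
    · exact h2 t ht h3

lemma exists_adj_of_freeSet_empty (hn : n % 3 = 1) {S : Finset (Fin n)}
    (h : freeSet n S = ∅) :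
    ∃ a b : Fin n, a ∈ S ∧ b ∈ S ∧ (b : ℕ) = (a : ℕ) + 1 := by
  -- TT x: some element of S with value x and x not divisible by 3
  set TT : ℕ → Prop := fun x => ∃ t : Fin n, t ∈ S ∧ (t : ℕ) = x ∧ x % 3 ≠ 0 with hTT
  have hb : ∀ j : ℕ, j < n → j % 3 = 0 → TT (j + 1) ∨ TT (j - 1) := by
    intro j hjn hj3
    have : (⟨j, hjn⟩ : Fin n) ∉ freeSet n S := by rw [h]; exact Finset.notMem_empty _
    rw [mem_freeSet] at this
    push_neg at this
    obtain ⟨t, htS, ht3, htj⟩ := this hj3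
    rcases Decidable.em ((t : ℕ) = j + 1) with h1 | h1
    · exact Or.inl ⟨t, htS, h1, by omega⟩
    · have h2 : j = (t : ℕ) + 1 := htj h1
      exact Or.inr ⟨t, htS, by omega, by omega⟩
  by_contra hpair
  push_neg at hpair
  have hnopair : ∀ x : ℕ, TT x → ¬ TT (x + 1) := by
    intro x ⟨t, ht, htx, _⟩ ⟨u, hu, hux, _⟩
    exact absurd (by omega : (u : ℕ) = (t : ℕ) + 1) (by
      intro hq
      exact absurd hq (by exact_mod_cast (fun hh => (hpair t u ht hu) hh)))
  have hn1 : 0 < n := by omega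
  have claim : ∀ i : ℕ, 3 * i + 1 < n → TT (3 * i + 1) := by
    intro i
    induction i with
    | zero =>
      intro _
      rcases hb 0 hn1 rfl with h1 | h1
      · exact h1
      · obtain ⟨t, _, _, ht3⟩ := h1
        omega
    | succ i ih =>
      intro hlt
      have h1 : 3 * i + 1 < n := by omega
      have h2 : 3 * i + 3 < n := by omega
      rcases hb (3 * i + 3) h2 (by omega) with h3 | h3
      · have : 3 * i + 3 + 1 = 3 * (i + 1) + 1 := by omega
        rwa [this] at h3
      · have : 3 * i + 3 - 1 = (3 * i + 1) + 1 := by omega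
        rw [this] at h3
        exact absurd h3 (hnopair _ (ih h1))
  rcases eq_or_ne n 1 with rfl | hne1
  · rcases hb 0 hn1 rfl with h1 | h1
    · obtain ⟨t, _, ht, _⟩ := h1
      omega
    · obtain ⟨t, _, _, ht3⟩ := h1
      omega
  · have hn4 : 4 ≤ n := by omega
    rcases hb (n - 1) (by omega) (by omega) with h1 | h1
    · obtain ⟨t, _, ht, _⟩ := h1
      have := t.isLt
      omega
    · have hTTn2 : TT (n - 2) := by
        have : n - 1 - 1 = n - 2 := by omega
        rwa [this] at h1
      have hTTn3 : TT (n - 3) := by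
        have h5 : 3 * ((n - 4) / 3) + 1 = n - 3 := by omega
        have := claim ((n - 4) / 3) (by omega)
        rwa [h5] at this
      have : n - 3 + 1 = n - 2 := by omega
      exact hnopair _ hTTn3 (this ▸ hTTn2)

/-! ### Ideal lemmas -/

lemma ksmul_mem_ideal {I : Ideal (ExteriorAlgebra K (Fin n → K))} {x} (k : K)
    (hx : x ∈ I) : k • x ∈ I := by
  rw [← algebraMap_smul (ExteriorAlgebra K (Fin n → K)) k x]
  exact I.smul_mem _ hx

lemma edge_central (a b : Fin n) (x : ExteriorAlgebra K (Fin n → K)) :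
    x * (ee K a * ee K b) = (ee K a * ee K b) * x := by
  induction x using ExteriorAlgebra.induction with
  | algebraMap r => rw [← Algebra.commutes]
  | ι v =>
    have swap : ∀ u w : Fin n → K, ι K u * ι K w = -(ι K w * ι K u) :=
      fun u w => eq_neg_of_add_eq_zero_left (ι_add_mul_swap _ _)
    show ι K v * (ι K (Pi.single a 1) * ι K (Pi.single b 1)) =
      (ι K (Pi.single a 1) * ι K (Pi.single b 1)) * ι K v
    calc ι K v * (ι K (Pi.single a 1) * ι K (Pi.single b 1))
        = (ι K v * ι K (Pi.single a 1)) * ι K (Pi.single b 1) := by rw [mul_assoc]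
      _ = -(ι K (Pi.single a 1) * ι K v) * ι K (Pi.single b 1) := by rw [swap]
      _ = -(ι K (Pi.single a 1) * (ι K v * ι K (Pi.single b 1))) := by rw [neg_mul, mul_assoc]
      _ = -(ι K (Pi.single a 1) * -(ι K (Pi.single b 1) * ι K v)) := by rw [swap v]
      _ = (ι K (Pi.single a 1) * ι K (Pi.single b 1)) * ι K v := by
          rw [mul_neg, neg_neg, mul_assoc]
  | mul x y hx hy => rw [mul_assoc, hy, ← mul_assoc, hx, mul_assoc]
  | add x y hx hy => rw [add_mul, hx, hy, mul_add]

lemma ee_mul_ee_mem {a b : Fin n} (hab : (b : ℕ) = (a : ℕ) + 1) :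
    ee K a * ee K b ∈ edgeIdeal K (SimpleGraph.pathGraph n) := by
  have hmem : ee K a * ee K b ∈ {x : ExteriorAlgebra K (Fin n → K) | ∃ i j,
      (SimpleGraph.pathGraph n).Adj i j ∧
      x = ExteriorAlgebra.ι K (Pi.single i 1) * ExteriorAlgebra.ι K (Pi.single j 1)} :=
    ⟨a, b, SimpleGraph.pathGraph_adj.mpr (Or.inl hab.symm), rfl⟩
  exact Ideal.subset_span hmem

lemma mon_mem_edgeIdeal {a b : Fin n} {S : Finset (Fin n)} (hab : (b : ℕ) = (a : ℕ) + 1)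
    (ha : a ∈ S) (hb : b ∈ S) : mon K S ∈ edgeIdeal K (SimpleGraph.pathGraph n) := by
  have hne : a ≠ b := by intro h; rw [h] at hab; omega
  set U := (S.erase a).erase b with hU
  have hbU : b ∉ U := Finset.notMem_erase _ _
  have haU : a ∉ U := fun h => Finset.notMem_erase a (S.erase b) (by
    rw [hU, Finset.erase_right_comm] at h; exact h)
  have haU' : a ∉ insert b U := by
    simp only [Finset.mem_insert]
    push_neg
    exact ⟨hne, haU⟩
  have hS : insert a (insert b U) = S := by
    rw [hU, Finset.insert_erase (Finset.mem_erase.mpr ⟨hne.symm, hb⟩), Finset.insert_erase ha]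
  have hcomp : (ee K a * ee K b) * mon K U =
      ((-1 : K) ^ ((U.filter (· < b)).card) * (-1 : K) ^ (((insert b U).filter (· < a)).card))
        • mon K S := by
    rw [mul_assoc, ee_mul_mon, if_neg hbU, mul_smul_comm, ee_mul_mon, if_neg haU', hS,
      smul_smul, mul_comm]
  have hsq : ∀ p : ℕ, ((-1 : K) ^ p) * ((-1 : K) ^ p) = 1 := by
    intro p
    rw [← pow_add, ← two_mul, pow_mul]
    norm_num
  set c : K := (-1 : K) ^ ((U.filter (· < b)).card) * (-1 : K) ^ (((insert b U).filter (· < a)).card)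
    with hc
  have hcc : c * c = 1 := by
    rw [hc, mul_mul_mul_comm, hsq, hsq, one_mul]
  have hfin : mon K S = c • ((ee K a * ee K b) * mon K U) := by
    rw [hcomp, smul_smul, hcc, one_smul]
  rw [hfin, ← edge_central]
  exact ksmul_mem_ideal _ (Ideal.mul_mem_left _ _ (ee_mul_ee_mem hab))

/-! ### Filter-card helpers -/

lemma card_filter_insert {j : Fin n} (j0 : Fin n) {S : Finset (Fin n)} (hjS : j ∉ S) :
    ((insert j S).filter (· < j0)).card
      = (S.filter (· < j0)).card + (if j < j0 then 1 else 0) := by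
  rw [Finset.filter_insert]
  split
  · rw [Finset.card_insert_of_notMem (fun hc => hjS (Finset.mem_of_mem_filter _ hc))]
  · rw [add_zero]

lemma card_filter_erase {j0 : Fin n} (j : Fin n) {S : Finset (Fin n)} (hj0 : j0 ∈ S) :
    (S.filter (· < j)).card
      = ((S.erase j0).filter (· < j)).card + (if j0 < j then 1 else 0) := by
  rw [Finset.filter_erase]
  split
  · have hmem : j0 ∈ S.filter (· < j) := Finset.mem_filter.mpr ⟨hj0, by assumption⟩
    rw [Finset.card_erase_of_mem hmem]
    have : 0 < (S.filter (· < j)).card := Finset.card_pos.mpr ⟨j0, hmem⟩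
    omega
  · have hnot : ¬ j0 < j := by assumption
    have : j0 ∉ (S.filter (· < j)) := fun hc => hnot (Finset.mem_filter.mp hc).2
    rw [Finset.erase_eq_of_notMem this, add_zero]

lemma neg_one_sq_smul {x : ExteriorAlgebra K (Fin n → K)} (p : ℕ) :
    ((-1 : K) ^ p) • ((-1 : K) ^ p) • x = x := by
  rw [smul_smul, ← pow_add, ← two_mul, pow_mul]
  norm_num

/-! ### The linear form and homotopy operator -/

variable (n) in
noncomputable def Mset : Finset (Fin n) := Finset.univ.filter (fun j : Fin n => (j : ℕ) % 3 = 0)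

variable (K n) in
noncomputable def ell : ExteriorAlgebra K (Fin n → K) := ∑ j ∈ Mset n, ee K j

lemma ell_eq : ι K (fun j : Fin n => if (j : ℕ) % 3 = 0 then (1 : K) else 0) = ell K n := by
  rw [ell]
  simp only [ee]
  rw [← map_sum]
  congr 1
  funext i
  rw [Finset.sum_apply]
  simp only [Pi.single_apply]
  rw [Finset.sum_ite_eq (Mset n) i (fun _ => (1 : K))]
  simp [Mset]

variable (K n) in
noncomputable def sfun (S : Finset (Fin n)) : ExteriorAlgebra K (Fin n → K) :=
  if h : (freeSet n S).Nonempty then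
    if (freeSet n S).min' h ∈ S then
      ((-1 : K) ^ ((S.filter (· < (freeSet n S).min' h)).card)) •
        mon K (S.erase ((freeSet n S).min' h))
    else 0
  else 0

variable (K n) in
noncomputable def sig : ExteriorAlgebra K (Fin n → K) →ₗ[K] ExteriorAlgebra K (Fin n → K) :=
  (monBasis K n).constr K (sfun K n)

lemma sig_mon (S : Finset (Fin n)) : sig K n (mon K S) = sfun K n S := by
  rw [sig, ← monBasis_apply, Module.Basis.constr_basis]

lemma sig_mon_mul_edge_mem (T : Finset (Fin n)) {a b : Fin n} (hab : (b : ℕ) = (a : ℕ) + 1) :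
    sig K n (mon K T * (ee K a * ee K b)) ∈ edgeIdeal K (SimpleGraph.pathGraph n) := by
  rw [edge_central, mul_assoc, ee_mul_mon]
  by_cases hbT : b ∈ T
  · rw [if_pos hbT, mul_zero, map_zero]
    exact Submodule.zero_mem _
  rw [if_neg hbT, mul_smul_comm, ee_mul_mon]
  by_cases haT : a ∈ insert b T
  · rw [if_pos haT, smul_zero, map_zero]
    exact Submodule.zero_mem _
  rw [if_neg haT, map_smul, map_smul, sig_mon]
  apply ksmul_mem_ideal
  apply ksmul_mem_ideal
  set S₁ := insert a (insert b T) with hS₁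
  rw [sfun]
  by_cases hne : (freeSet n S₁).Nonempty
  · rw [dif_pos hne]
    obtain ⟨hj03, hfree⟩ := mem_freeSet.mp ((freeSet n S₁).min'_mem hne)
    have haS₁ : a ∈ S₁ := Finset.mem_insert_self _ _
    have hbS₁ : b ∈ S₁ := by
      rw [hS₁]
      exact Finset.mem_insert_of_mem (Finset.mem_insert_self _ _)
    have hja : (freeSet n S₁).min' hne ≠ a := by
      intro h
      rw [h] at hj03
      have hb3 : (b : ℕ) % 3 ≠ 0 := by omega
      have h1 := (hfree b hbS₁ hb3).1
      rw [h] at h1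
      exact h1 hab
    have hjb : (freeSet n S₁).min' hne ≠ b := by
      intro h
      rw [h] at hj03
      have ha3 : (a : ℕ) % 3 ≠ 0 := by omega
      have h2 := (hfree a haS₁ ha3).2
      rw [h] at h2
      omega
    split
    · apply ksmul_mem_ideal
      exact mon_mem_edgeIdeal hab (Finset.mem_erase.mpr ⟨hja.symm, haS₁⟩)
        (Finset.mem_erase.mpr ⟨hjb.symm, hbS₁⟩)
    · exact Submodule.zero_mem _
  · rw [dif_neg hne]
    exact Submodule.zero_mem _

lemma sig_mem_of_mem {x : ExteriorAlgebra K (Fin n → K)}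
    (hx : x ∈ edgeIdeal K (SimpleGraph.pathGraph n)) :
    sig K n x ∈ edgeIdeal K (SimpleGraph.pathGraph n) := by
  -- J: the K-span of elements y * (ee a * ee b) for edges (a, b)
  set J : Submodule K (ExteriorAlgebra K (Fin n → K)) := Submodule.span K
    {z | ∃ (y : ExteriorAlgebra K (Fin n → K)) (a b : Fin n),
      (b : ℕ) = (a : ℕ) + 1 ∧ z = y * (ee K a * ee K b)} with hJ
  have hmulJ : ∀ (r : ExteriorAlgebra K (Fin n → K)), ∀ z ∈ J, r * z ∈ J := by
    intro r z hz
    induction hz using Submodule.span_induction with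
    | mem z hz =>
      obtain ⟨y, a, b, hab, rfl⟩ := hz
      rw [← mul_assoc]
      exact Submodule.subset_span ⟨r * y, a, b, hab, rfl⟩
    | zero => rw [mul_zero]; exact Submodule.zero_mem _
    | add u v _ _ hu hv => rw [mul_add]; exact Submodule.add_mem _ hu hv
    | smul k u _ hu => rw [mul_smul_comm]; exact Submodule.smul_mem _ _ hu
  have hIJ : x ∈ J := by
    induction hx using Submodule.span_induction with
    | mem z hz =>
      obtain ⟨i, j, hadj, rfl⟩ := hz
      rcases SimpleGraph.pathGraph_adj.mp hadj with h1 | h1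
      · exact Submodule.subset_span ⟨1, i, j, h1.symm, (one_mul _).symm⟩
      · have : ExteriorAlgebra.ι K (Pi.single i (1:K)) * ExteriorAlgebra.ι K (Pi.single j 1)
            = (-1 : K) • (1 * (ee K j * ee K i)) := by
          rw [one_mul]
          show ee K i * ee K j = _
          rw [ee_swap, neg_smul, one_smul]
        rw [this]
        exact Submodule.smul_mem _ _ (Submodule.subset_span ⟨1, j, i, h1.symm, rfl⟩)
    | zero => exact Submodule.zero_mem _
    | add u v _ _ hu hv => exact Submodule.add_mem _ hu hv
    | smul r u _ hu => exact hmulJ r u hu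
  clear hx
  induction hIJ using Submodule.span_induction with
  | mem z hz =>
    obtain ⟨y, a, b, hab, rfl⟩ := hz
    -- reduce to y a monomial
    have hy : y ∈ monSpan K n := by rw [monSpan_eq_top]; trivial
    induction hy using Submodule.span_induction with
    | mem y hy =>
      obtain ⟨T, rfl⟩ := hy
      exact sig_mon_mul_edge_mem T hab
    | zero => rw [zero_mul, map_zero]; exact Submodule.zero_mem _
    | add u v _ _ hu hv => rw [add_mul, map_add]; exact Submodule.add_mem _ hu hv
    | smul k u _ hu => rw [smul_mul_assoc, map_smul]; exact ksmul_mem_ideal _ hu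
  | zero => rw [map_zero]; exact Submodule.zero_mem _
  | add u v _ _ hu hv => rw [map_add]; exact Submodule.add_mem _ hu hv
  | smul k u _ hu => rw [map_smul]; exact ksmul_mem_ideal _ hu

lemma key_mon (hn : n % 3 = 1) (S : Finset (Fin n)) :
    mon K S - ell K n * sig K n (mon K S) - sig K n (ell K n * mon K S)
      ∈ edgeIdeal K (SimpleGraph.pathGraph n) := by
  have hsum : ∀ U : Finset (Fin n), ell K n * mon K U = ∑ j ∈ Mset n, (if j ∈ U then 0 else
      ((-1 : K) ^ ((U.filter (· < j)).card)) • mon K (insert j U)) := by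
    intro U
    rw [ell, Finset.sum_mul]
    exact Finset.sum_congr rfl fun j _ => ee_mul_mon j U
  have hsig_sum : sig K n (ell K n * mon K S) = ∑ j ∈ Mset n, (if j ∈ S then 0 else
      ((-1 : K) ^ ((S.filter (· < j)).card)) • sfun K n (insert j S)) := by
    rw [hsum, map_sum]
    refine Finset.sum_congr rfl fun j _ => ?_
    split
    · rw [map_zero]
    · rw [map_smul, sig_mon]
  have hj3M : ∀ j ∈ Mset n, (j : ℕ) % 3 = 0 := by
    intro j hj
    simpa [Mset] using hj
  rw [sig_mon]
  by_cases hF : (freeSet n S).Nonempty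
  case neg =>
    have h0 : sfun K n S = 0 := by rw [sfun, dif_neg hF]
    have hz : ∀ j ∈ Mset n, (if j ∈ S then (0 : ExteriorAlgebra K (Fin n → K)) else
        ((-1 : K) ^ ((S.filter (· < j)).card)) • sfun K n (insert j S)) = 0 := by
      intro j hj
      split
      · rfl
      · rw [sfun, freeSet_insert (hj3M j hj), dif_neg hF, smul_zero]
    rw [h0, mul_zero, hsig_sum, Finset.sum_congr rfl hz, Finset.sum_const_zero, sub_zero,
      sub_zero]
    obtain ⟨a, b, ha, hb, hab⟩ :=
      exists_adj_of_freeSet_empty hn (Finset.not_nonempty_iff_eq_empty.mp hF)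
    exact mon_mem_edgeIdeal hab ha hb
  have hj0F := (freeSet n S).min'_mem hF
  have hj03 : ((freeSet n S).min' hF : ℕ) % 3 = 0 := (mem_freeSet.mp hj0F).1
  have hj0M : (freeSet n S).min' hF ∈ Mset n := by simp [Mset, hj03]
  by_cases hj0S : (freeSet n S).min' hF ∈ S
  case neg =>
    have h0 : sfun K n S = 0 := by rw [sfun, dif_pos hF, if_neg hj0S]
    rw [h0, mul_zero, sub_zero, hsig_sum]
    have hterm : ∀ j ∈ Mset n, (if j ∈ S then (0 : ExteriorAlgebra K (Fin n → K)) else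
        ((-1 : K) ^ ((S.filter (· < j)).card)) • sfun K n (insert j S))
          = if j = (freeSet n S).min' hF then mon K S else 0 := by
      intro j hj
      by_cases hjS : j ∈ S
      · rw [if_pos hjS, if_neg]
        rintro rfl
        exact hj0S hjS
      · rw [if_neg hjS, sfun, freeSet_insert (hj3M j hj), dif_pos hF]
        by_cases hjj0 : j = (freeSet n S).min' hF
        · rw [if_pos (by rw [hjj0]; exact Finset.mem_insert_self _ _), if_pos hjj0]
          rw [← hjj0, Finset.erase_insert hjS]
          rw [show ((insert j S).filter (· < j)).card
              = (S.filter (· < j)).card + (if j < j then 1 else 0) from card_filter_insert j hjS]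
          rw [if_neg (lt_irrefl j), add_zero]
          exact neg_one_sq_smul _
        · rw [if_neg (by
            intro hmem
            rcases Finset.mem_insert.mp hmem with h | h
            · exact hjj0 h.symm
            · exact hj0S h), smul_zero, if_neg hjj0]
    rw [Finset.sum_congr rfl hterm, Finset.sum_ite_eq' (Mset n) _ (fun _ => mon K S),
      if_pos hj0M, sub_self]
    exact Submodule.zero_mem _
  case pos =>
    have hsfS : sfun K n S = ((-1 : K) ^ ((S.filter (· < (freeSet n S).min' hF)).card)) •
        mon K (S.erase ((freeSet n S).min' hF)) := by
      rw [sfun, dif_pos hF, if_pos hj0S]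
    rw [hsfS, mul_smul_comm, hsum (S.erase ((freeSet n S).min' hF)), Finset.smul_sum, hsig_sum,
      sub_sub, ← Finset.sum_add_distrib]
    have hterm : ∀ j ∈ Mset n,
        ((-1 : K) ^ ((S.filter (· < (freeSet n S).min' hF)).card) •
          (if j ∈ S.erase ((freeSet n S).min' hF) then (0 : ExteriorAlgebra K (Fin n → K)) else
            ((-1 : K) ^ (((S.erase ((freeSet n S).min' hF)).filter (· < j)).card)) •
              mon K (insert j (S.erase ((freeSet n S).min' hF))))
          + (if j ∈ S then (0 : ExteriorAlgebra K (Fin n → K)) else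
            ((-1 : K) ^ ((S.filter (· < j)).card)) • sfun K n (insert j S)))
          = if j = (freeSet n S).min' hF then mon K S else 0 := by
      intro j hj
      by_cases hjj0 : j = (freeSet n S).min' hF
      · rw [if_pos hjj0, hjj0, if_neg (Finset.notMem_erase _ _), if_pos hj0S, add_zero,
          Finset.insert_erase hj0S]
        rw [show (S.filter (· < (freeSet n S).min' hF)).card
            = ((S.erase ((freeSet n S).min' hF)).filter (· < (freeSet n S).min' hF)).card
              + (if (freeSet n S).min' hF < (freeSet n S).min' hF then 1 else 0) from
          card_filter_erase _ hj0S]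
        rw [if_neg (lt_irrefl _), add_zero]
        exact neg_one_sq_smul _
      · by_cases hjS : j ∈ S
        · have hjS' : j ∈ S.erase ((freeSet n S).min' hF) := Finset.mem_erase.mpr ⟨hjj0, hjS⟩
          rw [if_pos hjS', if_pos hjS, smul_zero, add_zero, if_neg hjj0]
        · have hjS' : j ∉ S.erase ((freeSet n S).min' hF) :=
            fun h => hjS (Finset.mem_of_mem_erase h)
          rw [if_neg hjS', if_neg hjS, if_neg hjj0, sfun, freeSet_insert (hj3M j hj),
            dif_pos hF, if_pos (Finset.mem_insert_of_mem hj0S),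
            Finset.erase_insert_of_ne hjj0]
          rw [smul_smul, smul_smul, ← pow_add, ← pow_add]
          have e1 : (S.filter (· < j)).card
              = ((S.erase ((freeSet n S).min' hF)).filter (· < j)).card
                + (if (freeSet n S).min' hF < j then 1 else 0) := card_filter_erase _ hj0S
          have e2 : ((insert j S).filter (· < (freeSet n S).min' hF)).card
              = (S.filter (· < (freeSet n S).min' hF)).card
                + (if j < (freeSet n S).min' hF then 1 else 0) := card_filter_insert _ hjS
          have htri : (if (freeSet n S).min' hF < j then 1 else 0)
              + (if j < (freeSet n S).min' hF then 1 else 0) = 1 := by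
            rcases lt_or_gt_of_ne hjj0 with h | h
            · rw [if_neg (asymm h), if_pos h]
            · rw [if_pos h, if_neg (asymm h)]
          rw [show (S.filter (· < j)).card + ((insert j S).filter (· < (freeSet n S).min' hF)).card
              = ((S.filter (· < (freeSet n S).min' hF)).card
                + ((S.erase ((freeSet n S).min' hF)).filter (· < j)).card) + 1 from by omega]
          rw [pow_succ, mul_neg_one, neg_smul]
          exact add_neg_cancel _
    rw [Finset.sum_congr rfl hterm, Finset.sum_ite_eq' (Mset n) _ (fun _ => mon K S),
      if_pos hj0M, sub_self]
    exact Submodule.zero_mem _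

lemma key_all (hn : n % 3 = 1) (x : ExteriorAlgebra K (Fin n → K)) :
    x - ell K n * sig K n x - sig K n (ell K n * x)
      ∈ edgeIdeal K (SimpleGraph.pathGraph n) := by
  have hx : x ∈ monSpan K n := by rw [monSpan_eq_top]; trivial
  induction hx using Submodule.span_induction with
  | mem y hy =>
    obtain ⟨S, rfl⟩ := hy
    exact key_mon hn S
  | zero =>
    rw [map_zero, mul_zero, map_zero, sub_zero, sub_zero]
    exact Submodule.zero_mem _
  | add u v _ _ hu hv =>
    have heq : (u + v) - ell K n * sig K n (u + v) - sig K n (ell K n * (u + v))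
        = (u - ell K n * sig K n u - sig K n (ell K n * u))
          + (v - ell K n * sig K n v - sig K n (ell K n * v)) := by
      rw [map_add, mul_add, mul_add, map_add]
      abel
    rw [heq]
    exact Submodule.add_mem _ hu hv
  | smul k u _ hu =>
    have heq : (k • u) - ell K n * sig K n (k • u) - sig K n (ell K n * (k • u))
        = k • (u - ell K n * sig K n u - sig K n (ell K n * u)) := by
      rw [map_smul, mul_smul_comm, mul_smul_comm, map_smul, smul_sub, smul_sub]
    rw [heq]
    exact ksmul_mem_ideal _ hu

end Stmt8Aux

open Stmt8Aux

/-- Let `E` be the exterior algebra on `n` variables over an infinite field and `Pₙ` the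
path graph on `n` vertices.  If `n ≡ 1 (mod 3)`, then the linear form
`e₁ + e₄ + e₇ + ⋯ + eₙ` (the sum of the variables with 1-based index `≡ 1 (mod 3)`) is a
regular element on `E/I_E(Pₙ)`. -/
theorem stmt8 (K : Type*) [Field K] [Infinite K] (n : ℕ) (hn : n % 3 = 1) :
    {m : ExteriorAlgebra K (Fin n → K) ⧸ edgeIdeal K (SimpleGraph.pathGraph n) |
        (ExteriorAlgebra.ι K (fun j : Fin n => if (j : ℕ) % 3 = 0 then (1 : K) else 0) :
          ExteriorAlgebra K (Fin n → K)) • m = 0} =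
      Set.range fun m : ExteriorAlgebra K (Fin n → K) ⧸ edgeIdeal K (SimpleGraph.pathGraph n) =>
        (ExteriorAlgebra.ι K (fun j : Fin n => if (j : ℕ) % 3 = 0 then (1 : K) else 0) :
          ExteriorAlgebra K (Fin n → K)) • m := by
  ext m
  simp only [Set.mem_setOf_eq, Set.mem_range]
  constructor
  · intro hm
    obtain ⟨x, rfl⟩ := Submodule.Quotient.mk_surjective _ m
    rw [ell_eq] at hm
    have hlx : ell K n * x ∈ edgeIdeal K (SimpleGraph.pathGraph n) := by
      rw [← Submodule.Quotient.mk_eq_zero, ← smul_eq_mul, Submodule.Quotient.mk_smul]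
      exact hm
    refine ⟨Submodule.Quotient.mk (sig K n x), ?_⟩
    rw [ell_eq]
    have hk := key_all hn x
    have h2 : x - ell K n * sig K n x ∈ edgeIdeal K (SimpleGraph.pathGraph n) := by
      have h3 := Submodule.add_mem _ hk (sig_mem_of_mem hlx)
      rwa [sub_add_cancel] at h3
    rw [← Submodule.Quotient.mk_smul, smul_eq_mul]
    exact ((Submodule.Quotient.eq _).mpr h2).symm
  · rintro ⟨m', rfl⟩
    rw [smul_smul, ι_sq_zero, zero_smul]
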